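/- arXiv:2411.02664 — 6 statements merged into one kernel-verified Lean document; each statement's English description precedes it below -/
import Mathlib

section
/- The EVAL-X optimality gap of an explanation e equals the expected KL divergence between the full conditional q(y|x) and the subset conditional q(y|x_{e(x)}): E_q[log q(y|x)] − E_q[log q(y | x_{e(x)})] = E_{v∼q(e(x))} E_{x | e(x)=v} [KL(q(y|x) ‖ q(y|x_v))], and this gap is zero if and only if for every v with P(e(x)=v) > 0, q(y|x) = q(y|x_v) for every x in the support with e(x) = v. -/
open scoped Classical

/-- Probability of an event under a probability mass function on a finite space. -/
noncomputable def Pr {Ω : Type*} [Fintype Ω] (p : Ω → ℝ) (E : Ω → Prop) : ℝ :=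
  ∑ ω, if E ω then p ω else 0

/-- Conditional probability `P(A | B)`. -/
noncomputable def cPr {Ω : Type*} [Fintype Ω] (p : Ω → ℝ) (A B : Ω → Prop) : ℝ :=
  Pr p (fun ω => A ω ∧ B ω) / Pr p B

lemma Pr_nonneg {Ω : Type*} [Fintype Ω] {p : Ω → ℝ} (hp : ∀ ω, 0 ≤ p ω) (E : Ω → Prop) :
    0 ≤ Pr p E := by
  apply Finset.sum_nonneg; intro ω _
  split
  · exact hp ω
  · exact le_rfl

lemma Pr_pos_of_mem {Ω : Type*} [Fintype Ω] {p : Ω → ℝ} (hp : ∀ ω, 0 ≤ p ω)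
    {E : Ω → Prop} {ω : Ω} (hE : E ω) (hω : 0 < p ω) : 0 < Pr p E := by
  have h1 : (if E ω then p ω else 0) ≤ Pr p E := by
    apply Finset.single_le_sum (f := fun ω' => if E ω' then p ω' else 0) _ (Finset.mem_univ ω)
    intro i _
    split
    · exact hp i
    · exact le_rfl
  rw [if_pos hE] at h1
  linarith

lemma cPr_nonneg {Ω : Type*} [Fintype Ω] {p : Ω → ℝ} (hp : ∀ ω, 0 ≤ p ω) (A B : Ω → Prop) :
    0 ≤ cPr p A B := div_nonneg (Pr_nonneg hp _) (Pr_nonneg hp _)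

lemma sum_cPr_eq_one {Ω Y : Type*} [Fintype Ω] [Fintype Y] {p : Ω → ℝ}
    (y : Ω → Y) {B : Ω → Prop} (hB : Pr p B ≠ 0) :
    ∑ y₀, cPr p (fun ω' => y ω' = y₀) B = 1 := by
  simp only [cPr, Pr]
  rw [← Finset.sum_div, Finset.sum_comm]
  rw [div_eq_one_iff_eq (by simpa [Pr] using hB)]
  refine Finset.sum_congr rfl fun ω _ => ?_
  rw [Finset.sum_eq_single (y ω)]
  · by_cases hb : B ω <;> simp [hb]
  · intro b _ hb
    have h2 : ¬(y ω = b ∧ B ω) := fun h => hb h.1.symm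
    rw [if_neg h2]
  · simp

lemma tower {Ω Y K : Type*} [Fintype Ω] [Fintype Y]
    (p : Ω → ℝ) (hp : ∀ ω, 0 ≤ p ω) (y : Ω → Y) (key : Ω → K) (F : K → Y → ℝ) :
    ∑ ω, p ω * ∑ y₀, cPr p (fun ω' => y ω' = y₀) (fun ω' => key ω' = key ω) * F (key ω) y₀
      = ∑ ω, p ω * F (key ω) (y ω) := by
  have step1 : ∀ ω : Ω,
      p ω * ∑ y₀, cPr p (fun ω' => y ω' = y₀) (fun ω' => key ω' = key ω) * F (key ω) y₀
        = ∑ ω', if key ω' = key ω then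
            p ω * p ω' * F (key ω) (y ω') / Pr p (fun ω'' => key ω'' = key ω) else 0 := by
    intro ω
    calc p ω * ∑ y₀, cPr p (fun ω' => y ω' = y₀) (fun ω' => key ω' = key ω) * F (key ω) y₀
        = ∑ y₀, ∑ ω', p ω * ((if y ω' = y₀ ∧ key ω' = key ω then p ω' else 0)
            / Pr p (fun ω'' => key ω'' = key ω)) * F (key ω) y₀ := by
          simp only [cPr, Pr]
          rw [Finset.mul_sum]
          refine Finset.sum_congr rfl fun y₀ _ => ?_
          rw [Finset.sum_div, Finset.sum_mul, Finset.mul_sum]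
          exact Finset.sum_congr rfl fun ω' _ => by ring
      _ = ∑ ω', ∑ y₀, p ω * ((if y ω' = y₀ ∧ key ω' = key ω then p ω' else 0)
            / Pr p (fun ω'' => key ω'' = key ω)) * F (key ω) y₀ := Finset.sum_comm
      _ = ∑ ω', if key ω' = key ω then
            p ω * p ω' * F (key ω) (y ω') / Pr p (fun ω'' => key ω'' = key ω) else 0 := by
          refine Finset.sum_congr rfl fun ω' _ => ?_
          rw [Finset.sum_eq_single (y ω')]
          · by_cases hk : key ω' = key ω
            · rw [if_pos (⟨rfl, hk⟩ : y ω' = y ω' ∧ key ω' = key ω), if_pos hk]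
              ring
            · have h2 : ¬(y ω' = y ω' ∧ key ω' = key ω) := fun h => hk h.2
              rw [if_neg h2, if_neg hk]
              simp
          · intro b _ hb
            have h2 : ¬(y ω' = b ∧ key ω' = key ω) := fun h => hb h.1.symm
            rw [if_neg h2]
            simp
          · simp
  have step2 : ∀ ω' : Ω,
      (∑ ω, if key ω' = key ω then
          p ω * p ω' * F (key ω) (y ω') / Pr p (fun ω'' => key ω'' = key ω) else 0)
        = p ω' * F (key ω') (y ω') := by
    intro ω'
    have h1 : (∑ ω, if key ω' = key ω then
          p ω * p ω' * F (key ω) (y ω') / Pr p (fun ω'' => key ω'' = key ω) else 0)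
        = ∑ ω, (if key ω = key ω' then p ω else 0)
            * (p ω' * F (key ω') (y ω') / Pr p (fun ω'' => key ω'' = key ω')) := by
      refine Finset.sum_congr rfl fun ω _ => ?_
      by_cases hk : key ω' = key ω
      · rw [if_pos hk, if_pos hk.symm]
        simp only [← hk]
        ring
      · rw [if_neg hk, if_neg fun h => hk h.symm, zero_mul]
    rw [h1, ← Finset.sum_mul]
    have hPr : (∑ ω, if key ω = key ω' then p ω else 0) = Pr p (fun ω'' => key ω'' = key ω') := rfl
    rw [hPr]
    by_cases hp' : p ω' = 0
    · simp [hp']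
    · have hpos : 0 < Pr p (fun ω'' => key ω'' = key ω') :=
        Pr_pos_of_mem hp rfl ((hp ω').lt_of_ne (Ne.symm hp'))
      field_simp
  calc ∑ ω, p ω * ∑ y₀, cPr p (fun ω' => y ω' = y₀) (fun ω' => key ω' = key ω) * F (key ω) y₀
      = ∑ ω, ∑ ω', (if key ω' = key ω then
          p ω * p ω' * F (key ω) (y ω') / Pr p (fun ω'' => key ω'' = key ω) else 0) :=
        Finset.sum_congr rfl fun ω _ => step1 ω
    _ = ∑ ω', ∑ ω, (if key ω' = key ω then
          p ω * p ω' * F (key ω) (y ω') / Pr p (fun ω'' => key ω'' = key ω) else 0) :=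
        Finset.sum_comm
    _ = ∑ ω', p ω' * F (key ω') (y ω') := Finset.sum_congr rfl fun ω' _ => step2 ω'

lemma gibbs {Y : Type*} [Fintype Y] (f g : Y → ℝ) (hf : ∀ i, 0 < f i) (hg : ∀ i, 0 < g i)
    (hfs : ∑ i, f i = 1) (hgs : ∑ i, g i = 1) :
    0 ≤ ∑ i, f i * Real.log (f i / g i) ∧
      ((∑ i, f i * Real.log (f i / g i)) = 0 ↔ ∀ i, f i = g i) := by
  have key : ∀ i, f i - g i ≤ f i * Real.log (f i / g i) := by
    intro i
    have h1 : 1 - (f i / g i)⁻¹ ≤ Real.log (f i / g i) :=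
      Real.one_sub_inv_le_log_of_pos (div_pos (hf i) (hg i))
    have h2 := mul_le_mul_of_nonneg_left h1 (hf i).le
    have h3 : f i * (1 - (f i / g i)⁻¹) = f i - g i := by
      rw [inv_div]
      have hf0 : f i ≠ 0 := (hf i).ne'
      field_simp
    linarith [h2, h3.symm.le, h3.le]
  have strict : ∀ i, f i ≠ g i → f i - g i < f i * Real.log (f i / g i) := by
    intro i hne
    have hne' : g i / f i ≠ 1 := by
      intro h
      apply hne
      rw [div_eq_one_iff_eq (hf i).ne'] at h
      exact h.symm
    have hlt : Real.log (g i / f i) < g i / f i - 1 :=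
      Real.log_lt_sub_one_of_pos (div_pos (hg i) (hf i)) hne'
    have hlog : Real.log (f i / g i) = - Real.log (g i / f i) := by
      rw [← Real.log_inv, inv_div]
    have h4 := mul_lt_mul_of_pos_left hlt (hf i)
    have h5 : f i * (g i / f i - 1) = g i - f i := by
      have hf0 : f i ≠ 0 := (hf i).ne'
      field_simp
    rw [hlog]
    nlinarith
  have hsub : ∑ i, (f i - g i) = (0 : ℝ) := by
    rw [Finset.sum_sub_distrib, hfs, hgs, sub_self]
  have hsplit : ∑ i, f i * Real.log (f i / g i)
      = ∑ i, (f i * Real.log (f i / g i) - (f i - g i)) := by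
    rw [Finset.sum_sub_distrib, hsub, sub_zero]
  have hterm : ∀ i ∈ (Finset.univ : Finset Y), 0 ≤ f i * Real.log (f i / g i) - (f i - g i) :=
    fun i _ => by linarith [key i]
  constructor
  · rw [hsplit]
    exact Finset.sum_nonneg hterm
  · constructor
    · intro h0
      rw [hsplit] at h0
      have hall := (Finset.sum_eq_zero_iff_of_nonneg hterm).mp h0
      intro i
      by_contra hne
      have := strict i hne
      have := hall i (Finset.mem_univ i)
      linarith
    · intro hall
      apply Finset.sum_eq_zero
      intro i _
      rw [hall i, div_self (hg i).ne', Real.log_one, mul_zero]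

/-- the EVAL-X optimality gap of an explanation `e` equals the expected KL
divergence between the full conditional `q(y|x)` and the subset conditional
`q(y|x_{e(x)})`, and the gap is zero iff for every selection with positive probability the
two conditionals agree on the support. -/
theorem evalx_gap_eq_expected_KL
    {Ω A Y : Type*} [Fintype Ω] [Fintype Y] {d : ℕ}
    (p : Ω → ℝ) (hp : ∀ ω, 0 ≤ p ω) (hsum : ∑ ω, p ω = 1)
    (x : Ω → Fin d → A) (y : Ω → Y)
    (e : (Fin d → A) → (Fin d → Bool))
    (hposfull : ∀ (y₀ : Y) (ω : Ω), 0 < p ω →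
      0 < cPr p (fun ω' => y ω' = y₀) (fun ω' => x ω' = x ω))
    (hposv : ∀ (y₀ : Y) (ω : Ω), 0 < p ω →
      0 < cPr p (fun ω' => y ω' = y₀)
            (fun ω' => ∀ i, e (x ω) i = true → x ω' i = x ω i)) :
    ((∑ ω, p ω * Real.log (cPr p (fun ω' => y ω' = y ω) (fun ω' => x ω' = x ω)))
        - (∑ ω, p ω * Real.log (cPr p (fun ω' => y ω' = y ω)
            (fun ω' => ∀ i, e (x ω) i = true → x ω' i = x ω i)))
      = ∑ ω, p ω *
          (∑ y₀, cPr p (fun ω' => y ω' = y₀) (fun ω' => x ω' = x ω) *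
            Real.log (cPr p (fun ω' => y ω' = y₀) (fun ω' => x ω' = x ω)
              / cPr p (fun ω' => y ω' = y₀)
                  (fun ω' => ∀ i, e (x ω) i = true → x ω' i = x ω i))))
    ∧ (((∑ ω, p ω * Real.log (cPr p (fun ω' => y ω' = y ω) (fun ω' => x ω' = x ω)))
        - (∑ ω, p ω * Real.log (cPr p (fun ω' => y ω' = y ω)
            (fun ω' => ∀ i, e (x ω) i = true → x ω' i = x ω i))) = 0)
      ↔ (∀ ω, 0 < p ω → ∀ y₀ : Y,
          cPr p (fun ω' => y ω' = y₀) (fun ω' => x ω' = x ω)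
            = cPr p (fun ω' => y ω' = y₀)
                (fun ω' => ∀ i, e (x ω) i = true → x ω' i = x ω i))) := by
  have T1 : ∑ ω, p ω * ∑ y₀, cPr p (fun ω' => y ω' = y₀) (fun ω' => x ω' = x ω)
        * Real.log (cPr p (fun ω' => y ω' = y₀) (fun ω' => x ω' = x ω))
      = ∑ ω, p ω * Real.log (cPr p (fun ω' => y ω' = y ω) (fun ω' => x ω' = x ω)) :=
    tower p hp y x (fun k y₀ => Real.log (cPr p (fun ω' => y ω' = y₀) (fun ω' => x ω' = k)))
  have T2 : ∑ ω, p ω * ∑ y₀, cPr p (fun ω' => y ω' = y₀) (fun ω' => x ω' = x ω)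
        * Real.log (cPr p (fun ω' => y ω' = y₀)
            (fun ω' => ∀ i, e (x ω) i = true → x ω' i = x ω i))
      = ∑ ω, p ω * Real.log (cPr p (fun ω' => y ω' = y ω)
            (fun ω' => ∀ i, e (x ω) i = true → x ω' i = x ω i)) :=
    tower p hp y x (fun k y₀ => Real.log (cPr p (fun ω' => y ω' = y₀)
      (fun ω' => ∀ i, e k i = true → x ω' i = k i)))
  have part1 : ((∑ ω, p ω * Real.log (cPr p (fun ω' => y ω' = y ω) (fun ω' => x ω' = x ω)))
        - (∑ ω, p ω * Real.log (cPr p (fun ω' => y ω' = y ω)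
            (fun ω' => ∀ i, e (x ω) i = true → x ω' i = x ω i)))
      = ∑ ω, p ω *
          (∑ y₀, cPr p (fun ω' => y ω' = y₀) (fun ω' => x ω' = x ω) *
            Real.log (cPr p (fun ω' => y ω' = y₀) (fun ω' => x ω' = x ω)
              / cPr p (fun ω' => y ω' = y₀)
                  (fun ω' => ∀ i, e (x ω) i = true → x ω' i = x ω i)))) := by
    rw [← T1, ← T2, ← Finset.sum_sub_distrib]
    refine Finset.sum_congr rfl fun ω _ => ?_
    rcases (hp ω).eq_or_lt with h0 | hpos
    · simp [← h0]
    · rw [← mul_sub]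
      congr 1
      rw [← Finset.sum_sub_distrib]
      refine Finset.sum_congr rfl fun y₀ _ => ?_
      rw [Real.log_div (hposfull y₀ ω hpos).ne' (hposv y₀ ω hpos).ne']
      ring
  refine ⟨part1, ?_⟩
  rw [part1]
  -- KL facts per ω with positive mass
  have hKL : ∀ ω : Ω, 0 < p ω →
      0 ≤ (∑ y₀, cPr p (fun ω' => y ω' = y₀) (fun ω' => x ω' = x ω) *
            Real.log (cPr p (fun ω' => y ω' = y₀) (fun ω' => x ω' = x ω)
              / cPr p (fun ω' => y ω' = y₀)
                  (fun ω' => ∀ i, e (x ω) i = true → x ω' i = x ω i)))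
      ∧ ((∑ y₀, cPr p (fun ω' => y ω' = y₀) (fun ω' => x ω' = x ω) *
            Real.log (cPr p (fun ω' => y ω' = y₀) (fun ω' => x ω' = x ω)
              / cPr p (fun ω' => y ω' = y₀)
                  (fun ω' => ∀ i, e (x ω) i = true → x ω' i = x ω i))) = 0
          ↔ ∀ y₀ : Y, cPr p (fun ω' => y ω' = y₀) (fun ω' => x ω' = x ω)
              = cPr p (fun ω' => y ω' = y₀)
                  (fun ω' => ∀ i, e (x ω) i = true → x ω' i = x ω i)) := by
    intro ω hpos
    have hPrf : Pr p (fun ω' => x ω' = x ω) ≠ 0 :=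
      (Pr_pos_of_mem hp (E := fun ω' => x ω' = x ω) rfl hpos).ne'
    have hPrg : Pr p (fun ω' => ∀ i, e (x ω) i = true → x ω' i = x ω i) ≠ 0 :=
      (Pr_pos_of_mem hp (fun i _ => rfl) hpos).ne'
    have hg := gibbs
      (fun y₀ => cPr p (fun ω' => y ω' = y₀) (fun ω' => x ω' = x ω))
      (fun y₀ => cPr p (fun ω' => y ω' = y₀)
        (fun ω' => ∀ i, e (x ω) i = true → x ω' i = x ω i))
      (fun y₀ => hposfull y₀ ω hpos) (fun y₀ => hposv y₀ ω hpos)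
      (sum_cPr_eq_one y hPrf) (sum_cPr_eq_one y hPrg)
    exact hg
  have hnn : ∀ ω ∈ (Finset.univ : Finset Ω),
      0 ≤ p ω * (∑ y₀, cPr p (fun ω' => y ω' = y₀) (fun ω' => x ω' = x ω) *
            Real.log (cPr p (fun ω' => y ω' = y₀) (fun ω' => x ω' = x ω)
              / cPr p (fun ω' => y ω' = y₀)
                  (fun ω' => ∀ i, e (x ω) i = true → x ω' i = x ω i))) := by
    intro ω _
    rcases (hp ω).eq_or_lt with h0 | hpos
    · rw [← h0, zero_mul]
    · exact mul_nonneg (hp ω) (hKL ω hpos).1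
  rw [Finset.sum_eq_zero_iff_of_nonneg hnn]
  constructor
  · intro h ω hpos y₀
    have h1 := h ω (Finset.mem_univ ω)
    rcases mul_eq_zero.mp h1 with h2 | h2
    · exact absurd h2 hpos.ne'
    · exact ((hKL ω hpos).2.mp h2) y₀
  · intro h ω _
    rcases (hp ω).eq_or_lt with h0 | hpos
    · rw [← h0, zero_mul]
    · rw [(hKL ω hpos).2.mpr (h ω hpos), mul_zero]
end

section
/- In the three-bit DGP, the 'marginal' explanation e_encode (select coordinate 1 if x₃ = 1, coordinate 2 if x₃ = 0) is encoding: conditional on x₁ = a and E_{ξ₁} = 1 the label distribution is P(y = a) = 0.9, while conditional on x₁ = a and E_{ξ₁} = 0 it is P(y = a) = 0.5, and 0 < P(E_{ξ₁} = 1 | x₁ = a) < 1; hence y is conditionally dependent on E_{ξ₁} given x₁. -/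
open scoped Classical

/-- Conditional independence of a (finite-valued) random variable `y` and a binary
variable given by the event `E`, given the conditioning event `C`. -/
def CondIndepBin {Ω Y : Type*} [Fintype Ω] (p : Ω → ℝ) (y : Ω → Y) (E C : Ω → Prop) : Prop :=
  ∀ y₀ : Y,
    cPr p (fun ω => y ω = y₀ ∧ E ω) C
        = cPr p (fun ω => y ω = y₀) C * cPr p E C ∧
    cPr p (fun ω => y ω = y₀ ∧ ¬ E ω) C
        = cPr p (fun ω => y ω = y₀) C * cPr p (fun ω => ¬ E ω) C

/-- The three-bit DGP: `(x₁,x₂,x₃)` uniform on `{0,1}³` together with an independent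
"flip" bit that is `true` with probability `0.1`. -/
noncomputable def pTB : (Bool × Bool × Bool) × Bool → ℝ := fun ω =>
  (1 / 8 : ℝ) * (if ω.2 = true then (0.1 : ℝ) else (0.9 : ℝ))

/-- The label: `y = x₁ ⊕ flip` if `x₃ = 1`, and `y = x₂ ⊕ flip` if `x₃ = 0`; hence
`y = x₁` w.p. `0.9` when `x₃ = 1`, and `y = x₂` w.p. `0.9` when `x₃ = 0`. -/
def yTB : (Bool × Bool × Bool) × Bool → Bool := fun ω =>
  if ω.1.2.2 = true then xor ω.1.1 ω.2 else xor ω.1.2.1 ω.2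

/-- in the three-bit DGP, the explanation `e_encode` (select coordinate 1
iff `x₃ = 1`), whose indicator `E_{ξ₁}` is the event `x₃ = 1`, is encoding:
`P(E_{ξ₁}=1 | x₁=a) = 1/2`, `P(y=a | x₁=a, E_{ξ₁}=1) = 0.9`,
`P(y=a | x₁=a, E_{ξ₁}=0) = 0.5`, so `y ⫫ E_{ξ₁} | x₁` fails. -/
theorem three_bit_marg_explanation_encodes :
    ∀ a : Bool,
      cPr pTB (fun ω => ω.1.2.2 = true) (fun ω => ω.1.1 = a) = 1 / 2
      ∧ cPr pTB (fun ω => yTB ω = a) (fun ω => ω.1.1 = a ∧ ω.1.2.2 = true) = 0.9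
      ∧ cPr pTB (fun ω => yTB ω = a) (fun ω => ω.1.1 = a ∧ ω.1.2.2 = false) = 0.5
      ∧ ¬ CondIndepBin pTB yTB (fun ω => ω.1.2.2 = true) (fun ω => ω.1.1 = a) := by
  intro a
  refine ⟨?_, ?_, ?_, ?_⟩
  · cases a <;> simp [cPr, Pr, pTB, yTB, Fintype.sum_prod_type, Fintype.sum_bool] <;> norm_num
  · cases a <;> simp [cPr, Pr, pTB, yTB, Fintype.sum_prod_type, Fintype.sum_bool] <;> norm_num
  · cases a <;> simp [cPr, Pr, pTB, yTB, Fintype.sum_prod_type, Fintype.sum_bool] <;> norm_num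
  · intro h
    have h1 := (h a).1
    cases a <;> simp [cPr, Pr, pTB, yTB, Fintype.sum_prod_type, Fintype.sum_bool] at h1 <;> norm_num at h1
end

section
/- In the three-bit DGP, the unselected inputs under e_encode are jointly independent of the label: with e_encode selecting x₁ when x₃=1 and x₂ when x₃=0, the pair (unselected informative input, x₃) is independent of y; consequently ROAR scores e_encode optimally. -/
open scoped Classical

/-- in the three-bit DGP the unselected inputs under `e_encode` — the pair
`(unselected informative input, x₃)`, namely `(x₂, x₃)` when `x₃ = 1` and `(x₁, x₃)` when
`x₃ = 0` — are jointly independent of the label `y` (so ROAR scores `e_encode`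
optimally). -/
theorem three_bit_unselected_indep_label :
    ∀ (z : Bool × Bool) (c : Bool),
      Pr pTB (fun ω =>
          ((if ω.1.2.2 = true then ω.1.2.1 else ω.1.1), ω.1.2.2) = z ∧ yTB ω = c)
        = Pr pTB (fun ω =>
            ((if ω.1.2.2 = true then ω.1.2.1 else ω.1.1), ω.1.2.2) = z)
          * Pr pTB (fun ω => yTB ω = c) := by
  intro z c
  obtain ⟨a,b⟩ := z
  cases a <;> cases b <;> cases c <;> (simp only [Pr, pTB, yTB]; norm_num [Fintype.sum_prod_type])
end

section
/- In the three-bit DGP, the padded value of the e_encode explanation is a sufficient statistic for y: P(y = 1 | x) equals 0.9 when the selected value is 1 and 0.1 when the selected value is 0, regardless of which coordinate was selected; hence P(y = 1 | x) = P(y = 1 | val(x_{e(x)})), and FRESH scores e_encode optimally. -/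
open scoped Classical

/-- in the three-bit DGP, the padded value of the `e_encode` explanation —
the selected bit `x₁` if `x₃ = 1` else `x₂` — is a sufficient statistic for `y`:
`P(y=1 | x)` is `0.9` when the selected bit is `1` and `0.1` otherwise, and equals
`P(y=1 | val(x_{e(x)}))` (so FRESH scores `e_encode` optimally). -/
theorem three_bit_selected_value_sufficient :
    ∀ x₀ : Bool × Bool × Bool,
      (cPr pTB (fun ω => yTB ω = true) (fun ω => ω.1 = x₀)
          = (if (if x₀.2.2 = true then x₀.1 else x₀.2.1) = true
              then (0.9 : ℝ) else (0.1 : ℝ)))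
      ∧ (cPr pTB (fun ω => yTB ω = true) (fun ω => ω.1 = x₀)
          = cPr pTB (fun ω => yTB ω = true)
              (fun ω => (if ω.1.2.2 = true then ω.1.1 else ω.1.2.1)
                  = (if x₀.2.2 = true then x₀.1 else x₀.2.1))) := by
  rintro ⟨a,b,c⟩
  cases a <;> cases b <;> cases c <;>
    constructor <;>
      simp only [cPr, Pr, pTB, yTB, Fintype.sum_prod_type, Fintype.sum_bool] <;>
        norm_num
end

section
/- In the three-bit DGP, the encoding explanation e_encode achieves a strictly higher EVAL-X log-likelihood score than the non-encoding constant explanation selecting x₃: EVAL-X(q, e_encode) = 0.9·log 0.7 + 0.1·log 0.3 ≈ −0.44 > log(1/2) ≈ −0.69 = EVAL-X(q, e_c) where e_c(x) ≡ ξ₃. -/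
open scoped Classical

/-- in the three-bit DGP, the encoding explanation `e_encode` (select
coordinate 1 iff `x₃ = 1`, else coordinate 2) gets EVAL-X score
`0.9·log 0.7 + 0.1·log 0.3`, strictly higher than the score `log (1/2)` of the
non-encoding constant explanation selecting `x₃`. -/
theorem three_bit_evalx_encode_beats_constant :
    ((∑ ω, pTB ω * Real.log (cPr pTB (fun ω' => yTB ω' = yTB ω)
          (fun ω' => if ω.1.2.2 = true then ω'.1.1 = ω.1.1 else ω'.1.2.1 = ω.1.2.1)))
        = 0.9 * Real.log 0.7 + 0.1 * Real.log 0.3)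
    ∧ ((∑ ω, pTB ω * Real.log (cPr pTB (fun ω' => yTB ω' = yTB ω)
          (fun ω' => ω'.1.2.2 = ω.1.2.2)))
        = Real.log (1 / 2))
    ∧ ((∑ ω, pTB ω * Real.log (cPr pTB (fun ω' => yTB ω' = yTB ω)
          (fun ω' => ω'.1.2.2 = ω.1.2.2)))
        < ∑ ω, pTB ω * Real.log (cPr pTB (fun ω' => yTB ω' = yTB ω)
          (fun ω' => if ω.1.2.2 = true then ω'.1.1 = ω.1.1 else ω'.1.2.1 = ω.1.2.1))) := by
  have hA : Real.log (5/7) < 5/7 - 1 := Real.log_lt_sub_one_of_pos (by norm_num) (by norm_num)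
  have hB : Real.log (5/3) < 5/3 - 1 := Real.log_lt_sub_one_of_pos (by norm_num) (by norm_num)
  have e1 : Real.log (1/2) - Real.log (5/7) = Real.log 0.7 := by
    rw [← Real.log_div (by norm_num) (by norm_num)]; norm_num
  have e2 : Real.log (1/2) - Real.log (5/3) = Real.log 0.3 := by
    rw [← Real.log_div (by norm_num) (by norm_num)]; norm_num
  have h1 : ((∑ ω, pTB ω * Real.log (cPr pTB (fun ω' => yTB ω' = yTB ω)
          (fun ω' => if ω.1.2.2 = true then ω'.1.1 = ω.1.1 else ω'.1.2.1 = ω.1.2.1)))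
        = 0.9 * Real.log 0.7 + 0.1 * Real.log 0.3) := by
    simp only [Fintype.sum_prod_type, Fintype.sum_bool, Pr, cPr, pTB, yTB]
    norm_num
    ring
  have h2 : ((∑ ω, pTB ω * Real.log (cPr pTB (fun ω' => yTB ω' = yTB ω)
          (fun ω' => ω'.1.2.2 = ω.1.2.2)))
        = Real.log (1 / 2)) := by
    simp only [Fintype.sum_prod_type, Fintype.sum_bool, Pr, cPr, pTB, yTB]
    norm_num
    ring
  refine ⟨h1, h2, ?_⟩
  rw [h1, h2]
  nlinarith [e1, e2, hA, hB]
end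

section
/- Position-based encoding satisfies the encoding definition: suppose background pixel values (x₁, x₂) are jointly independent of a binary label y with 0 < P(y = dog) < 1, and the explanation selects coordinate 1 exactly when y is determined to be 'dog' from x (i.e., E_{ξ₁} = 1[q(y=dog|x)=1], with q(y|x) deterministic). Then P(E_{ξ₁} = 1 | x₁ = a) = P(y = dog) ∈ (0,1) and P(y = dog | x₁ = a, E_{ξ₁} = 1) = 1 ≠ 0 = P(y = dog | x₁ = a, E_{ξ₁} = 0), so y is conditionally dependent on E_{ξ₁} given x₁ = a. -/
open scoped Classical

lemma Pr_congr {Ω : Type*} [Fintype Ω] (p : Ω → ℝ) {E F : Ω → Prop}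
    (h : ∀ ω, E ω ↔ F ω) : Pr p E = Pr p F := by
  unfold Pr
  exact Finset.sum_congr rfl fun ω _ => by rw [h ω]

lemma Pr_fiber {Ω A : Type*} [Fintype Ω] [Fintype A] (p : Ω → ℝ) (f : Ω → A)
    (E : Ω → Prop) : Pr p E = ∑ b, Pr p (fun ω => E ω ∧ f ω = b) := by
  unfold Pr
  rw [Finset.sum_comm]
  refine Finset.sum_congr rfl fun ω _ => ?_
  by_cases h : E ω <;> simp [h]

/-- position-based encoding satisfies the encoding definition.  The label
`y = g(x)` (`true` = dog) is deterministic in `x`, the background coordinates `(x₁, x₂)`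
are jointly independent of `y` with `0 < P(y = dog) < 1`, and the explanation selects
coordinate 1 (`e x = 0`) exactly when the label is dog.  Then for every `a` with
`P(x₁ = a) > 0`: `P(E_{ξ₁}=1 | x₁=a) = P(y=dog) ∈ (0,1)`,
`P(y=dog | x₁=a, E_{ξ₁}=1) = 1 ≠ 0 = P(y=dog | x₁=a, E_{ξ₁}=0)`, so `y` is conditionally
dependent on `E_{ξ₁}` given `x₁ = a`, i.e. the explanation is encoding. -/
theorem position_based_encoding
    {Ω X A : Type*} [Fintype Ω] [Fintype A]
    (p : Ω → ℝ) (hp : ∀ ω, 0 ≤ p ω) (hsum : ∑ ω, p ω = 1)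
    (x : Ω → X) (x1 x2 : X → A) (g : X → Bool)
    (e : X → Fin 2) (he : ∀ z, e z = 0 ↔ g z = true)
    (hindep : ∀ (a b : A) (c : Bool),
      Pr p (fun ω => x1 (x ω) = a ∧ x2 (x ω) = b ∧ g (x ω) = c)
        = Pr p (fun ω => x1 (x ω) = a ∧ x2 (x ω) = b) * Pr p (fun ω => g (x ω) = c))
    (h0 : 0 < Pr p (fun ω => g (x ω) = true))
    (h1 : Pr p (fun ω => g (x ω) = true) < 1) :
    ∀ a : A, 0 < Pr p (fun ω => x1 (x ω) = a) →
      (cPr p (fun ω => e (x ω) = 0) (fun ω => x1 (x ω) = a)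
          = Pr p (fun ω => g (x ω) = true)
        ∧ 0 < cPr p (fun ω => e (x ω) = 0) (fun ω => x1 (x ω) = a)
        ∧ cPr p (fun ω => e (x ω) = 0) (fun ω => x1 (x ω) = a) < 1
        ∧ cPr p (fun ω => g (x ω) = true)
            (fun ω => x1 (x ω) = a ∧ e (x ω) = 0) = 1
        ∧ cPr p (fun ω => g (x ω) = true)
            (fun ω => x1 (x ω) = a ∧ ¬ e (x ω) = 0) = 0
        ∧ ¬ CondIndepBin p (fun ω => g (x ω)) (fun ω => e (x ω) = 0)
            (fun ω => x1 (x ω) = a)) := by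
  intro a ha
  set Pg := Pr p (fun ω => g (x ω) = true) with hPg
  set Pa := Pr p (fun ω => x1 (x ω) = a) with hPa
  -- marginal independence of x1 and g
  have hmarg : ∀ c : Bool,
      Pr p (fun ω => x1 (x ω) = a ∧ g (x ω) = c)
        = Pa * Pr p (fun ω => g (x ω) = c) := by
    intro c
    have h1' : Pr p (fun ω => x1 (x ω) = a ∧ g (x ω) = c)
        = ∑ b, Pr p (fun ω => x1 (x ω) = a ∧ x2 (x ω) = b ∧ g (x ω) = c) := by
      rw [Pr_fiber p (fun ω => x2 (x ω)) (fun ω => x1 (x ω) = a ∧ g (x ω) = c)]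
      exact Finset.sum_congr rfl fun b _ => Pr_congr p (fun ω => by tauto)
    have h2' : Pa = ∑ b, Pr p (fun ω => x1 (x ω) = a ∧ x2 (x ω) = b) := by
      rw [hPa, Pr_fiber p (fun ω => x2 (x ω)) (fun ω => x1 (x ω) = a)]
    rw [h1']
    simp only [hindep]
    rw [← Finset.sum_mul, ← h2']
  -- key probabilities
  have key : Pr p (fun ω => e (x ω) = 0 ∧ x1 (x ω) = a) = Pa * Pg := by
    rw [Pr_congr p (F := fun ω => x1 (x ω) = a ∧ g (x ω) = true)
      (fun ω => by have := he (x ω); tauto)]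
    exact hmarg true
  have key2 : Pr p (fun ω => x1 (x ω) = a ∧ e (x ω) = 0) = Pa * Pg := by
    rw [Pr_congr p (F := fun ω => e (x ω) = 0 ∧ x1 (x ω) = a) (fun ω => by tauto), key]
  have hc1 : cPr p (fun ω => e (x ω) = 0) (fun ω => x1 (x ω) = a) = Pg := by
    unfold cPr
    rw [key]
    field_simp
    exact div_self ha.ne'
  have hPaPg : 0 < Pa * Pg := mul_pos ha h0
  have hc2 : cPr p (fun ω => g (x ω) = true)
      (fun ω => x1 (x ω) = a ∧ e (x ω) = 0) = 1 := by
    unfold cPr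
    rw [key2, Pr_congr p (F := fun ω => x1 (x ω) = a ∧ e (x ω) = 0)
      (fun ω => by have := he (x ω); tauto), key2]
    field_simp
  have hc3 : cPr p (fun ω => g (x ω) = true)
      (fun ω => x1 (x ω) = a ∧ ¬ e (x ω) = 0) = 0 := by
    unfold cPr
    have : Pr p (fun ω => g (x ω) = true ∧ x1 (x ω) = a ∧ ¬ e (x ω) = 0) = 0 := by
      rw [Pr_congr p (F := fun _ => False) (fun ω => by
        constructor
        · rintro ⟨hg, -, hne⟩; exact hne ((he _).mpr hg)
        · exact False.elim)]
      simp [Pr]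
    rw [this, zero_div]
  refine ⟨hc1, hc1 ▸ h0, hc1 ▸ h1, hc2, hc3, ?_⟩
  intro hci
  have := (hci true).1
  rw [hc1] at this
  have hl : cPr p (fun ω => g (x ω) = true ∧ e (x ω) = 0)
      (fun ω => x1 (x ω) = a) = Pg := by
    unfold cPr
    rw [Pr_congr p (F := fun ω => e (x ω) = 0 ∧ x1 (x ω) = a)
      (fun ω => by have := he (x ω); tauto), key]
    field_simp
    exact div_self ha.ne'
  have hr : cPr p (fun ω => g (x ω) = true) (fun ω => x1 (x ω) = a) = Pg := by
    unfold cPr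
    rw [Pr_congr p (F := fun ω => x1 (x ω) = a ∧ g (x ω) = true)
      (fun ω => by tauto), hmarg true]
    field_simp
    exact mul_div_cancel_left₀ _ ha.ne'
  rw [hl, hr] at this
  nlinarith
end
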